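/- Let y be a nonnegative square-integrable real random variable with E[y] = μ where 0 ≤ μ ≤ 1, and suppose E[y²] ≤ μ + (1/2)·μ². Then E[min(y, 1)] ≥ 0.646·μ. -/

import Mathlib

open MeasureTheory

lemma tangent_bound (t β : ℝ) (hβ0 : 0 ≤ β) (hβ : β ≤ 0.3) :
    t - (t - β) ^ 2 / (4 * (1 - β)) ≤ min t 1 := by
  have hD : (0:ℝ) < 4 * (1 - β) := by nlinarith
  rcases le_total t 1 with h | h
  · rw [min_eq_left h]
    have : 0 ≤ (t - β) ^ 2 / (4 * (1 - β)) := div_nonneg (sq_nonneg _) hD.le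
    linarith
  · rw [min_eq_right h]
    have hle : t - 1 ≤ (t - β) ^ 2 / (4 * (1 - β)) := by
      rw [le_div_iff₀ hD]; nlinarith [sq_nonneg (t - β - 2 * (1 - β))]
    linarith

/-- Lemma 3.1(a): if `y ≥ 0` is square-integrable with `E[y] = μ ∈ [0,1]` and
`E[y²] ≤ μ + μ²/2`, then `E[min(y,1)] ≥ 0.646·μ`. -/
theorem second_moment_to_ratio_a
    {Ω : Type*} [MeasurableSpace Ω] (P : Measure Ω) [IsProbabilityMeasure P]
    (y : Ω → ℝ) (μ : ℝ)
    (hy : MemLp y 2 P) (hpos : ∀ ω, 0 ≤ y ω)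
    (hmean : ∫ ω, y ω ∂P = μ) (hμ0 : 0 ≤ μ) (hμ1 : μ ≤ 1)
    (hsq : ∫ ω, (y ω) ^ 2 ∂P ≤ μ + (1/2) * μ ^ 2) :
    0.646 * μ ≤ ∫ ω, min (y ω) 1 ∂P := by
  set β : ℝ := 0.3 * μ with hβdef
  have hβ0 : 0 ≤ β := by positivity
  have hβ : β ≤ 0.3 := by simp only [hβdef]; nlinarith
  have hD : (0:ℝ) < 4 * (1 - β) := by nlinarith
  have hint_y : Integrable y P := hy.integrable one_le_two
  have hint_sq : Integrable (fun ω => y ω ^ 2) P := hy.integrable_sq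
  have hint_quad : Integrable (fun ω => (y ω - β) ^ 2) P := by
    have : (fun ω => (y ω - β) ^ 2) =
        fun ω => y ω ^ 2 - (2 * β) * y ω + β ^ 2 := by
      funext ω; ring
    rw [this]
    exact (hint_sq.sub (hint_y.const_mul _)).add (integrable_const _)
  have hint_min : Integrable (fun ω => min (y ω) 1) P := by
    refine hint_y.mono ?_ (Filter.Eventually.of_forall fun ω => ?_)
    · exact hint_y.aestronglyMeasurable.inf aestronglyMeasurable_const
    · rw [Real.norm_eq_abs, Real.norm_eq_abs, abs_of_nonneg (hpos ω),
        abs_of_nonneg (le_min (hpos ω) zero_le_one)]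
      exact min_le_left _ _
  have hmono : ∫ ω, (y ω - (y ω - β) ^ 2 / (4 * (1 - β))) ∂P ≤
      ∫ ω, min (y ω) 1 ∂P := by
    refine integral_mono (hint_y.sub (hint_quad.div_const _)) hint_min
      fun ω => tangent_bound (y ω) β hβ0 hβ
  have hI : Integrable (fun ω => y ω ^ 2 - 2 * β * y ω) P := by
    exact hint_sq.sub (hint_y.const_mul _)
  have hquad_val : ∫ ω, (y ω - β) ^ 2 ∂P =
      (∫ ω, y ω ^ 2 ∂P) - 2 * β * μ + β ^ 2 := by
    calc ∫ ω, (y ω - β) ^ 2 ∂P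
        = ∫ ω, (y ω ^ 2 - 2 * β * y ω + β ^ 2) ∂P := by
          congr 1; funext ω; ring
      _ = (∫ ω, (y ω ^ 2 - 2 * β * y ω) ∂P) + ∫ _ω, (β ^ 2 : ℝ) ∂P :=
          integral_add hI (integrable_const _)
      _ = ((∫ ω, y ω ^ 2 ∂P) - ∫ ω, 2 * β * y ω ∂P) + β ^ 2 := by
          rw [integral_sub hint_sq (hint_y.const_mul _), integral_const]
          simp [measure_univ]
      _ = (∫ ω, y ω ^ 2 ∂P) - 2 * β * μ + β ^ 2 := by
          rw [integral_const_mul, hmean]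
  have hlhs : ∫ ω, (y ω - (y ω - β) ^ 2 / (4 * (1 - β))) ∂P =
      μ - ((∫ ω, y ω ^ 2 ∂P) - 2 * β * μ + β ^ 2) / (4 * (1 - β)) := by
    rw [integral_sub hint_y (hint_quad.div_const _), hmean, integral_div, hquad_val]
  rw [hlhs] at hmono
  refine le_trans ?_ hmono
  have hND : ((∫ ω, y ω ^ 2 ∂P) - 2 * β * μ + β ^ 2) / (4 * (1 - β)) ≤ 0.354 * μ := by
    rw [div_le_iff₀ hD]
    have h1 : (∫ ω, y ω ^ 2 ∂P) - 2 * β * μ + β ^ 2 ≤ μ - 0.01 * μ ^ 2 := by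
      simp only [hβdef]; nlinarith
    simp only [hβdef]
    nlinarith
  linarith
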